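/- Let g : [0,∞) → ℝ be continuous and let E : [0,∞) → {0,1} be the hysteresis switching state defined by E(0) = 0, switching 0 → 1 when g(t) ≤ 0 and 1 → 0 when g(t) ≥ δ, with δ > 0 fixed. Suppose g is L-Lipschitz. Then between any two consecutive switches of E, at least time δ/L elapses; in particular E has at most finitely many switches on any bounded interval (no Zeno behavior). -/
import Mathlib

theorem hysteresis_min_dwell_time_no_zeno
    (g : ℝ → ℝ) (δ L : ℝ) (hδ : 0 < δ) (hL : 0 < L)
    (hlip : LipschitzWith (Real.toNNReal L) g) :
    (∀ t₁ t₂ : ℝ,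
        ((g t₁ ≤ 0 ∧ δ ≤ g t₂) ∨ (δ ≤ g t₁ ∧ g t₂ ≤ 0)) →
        δ / L ≤ |t₂ - t₁|) ∧
      ∀ (a b : ℝ) (S : Set ℝ), S ⊆ Set.Icc a b →
        S.Pairwise (fun s t => δ / L ≤ |s - t|) → S.Finite := by
  constructor
  · intro t₁ t₂ h
    have hdist := hlip.dist_le_mul t₂ t₁
    rw [Real.coe_toNNReal L hL.le] at hdist
    have hg : δ ≤ |g t₂ - g t₁| := by
      rcases h with ⟨h1, h2⟩ | ⟨h1, h2⟩
      · rw [abs_of_nonneg (by linarith)]; linarith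
      · rw [abs_of_nonpos (by linarith)]; linarith
    have hLm : δ ≤ L * |t₂ - t₁| := by
      calc δ ≤ |g t₂ - g t₁| := hg
        _ = dist (g t₂) (g t₁) := (Real.dist_eq _ _).symm
        _ ≤ L * dist t₂ t₁ := hdist
        _ = L * |t₂ - t₁| := by rw [Real.dist_eq]
    rw [div_le_iff₀' hL]
    linarith
  · intro a b S hSab hsep
    set ε := δ / L with hε
    have hεpos : 0 < ε := div_pos hδ hL
    have hinj : Set.InjOn (fun t => ⌊t / ε⌋) S := by
      intro s hs t ht hst
      by_contra hne
      have h1 : ε ≤ |s - t| := hsep hs ht hne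
      have h3 : (1:ℝ) ≤ |s / ε - t / ε| := by
        rw [div_sub_div_same, abs_div, abs_of_pos hεpos, le_div_iff₀ hεpos, one_mul]
        exact h1
      simp only at hst
      have hs1 := Int.floor_le (s / ε)
      have hs2 := Int.lt_floor_add_one (s / ε)
      have ht1 := Int.floor_le (t / ε)
      have ht2 := Int.lt_floor_add_one (t / ε)
      rw [hst] at hs1 hs2
      rw [le_abs] at h3
      rcases h3 with h3 | h3 <;> linarith
    have hmap : ∀ t ∈ S, ⌊t / ε⌋ ∈ Set.Icc ⌊a / ε⌋ ⌊b / ε⌋ := by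
      intro t ht
      obtain ⟨h1, h2⟩ := hSab ht
      exact ⟨Int.floor_le_floor (by gcongr), Int.floor_le_floor (by gcongr)⟩
    exact Set.Finite.of_finite_image
      ((Set.finite_Icc ⌊a / ε⌋ ⌊b / ε⌋).subset (by rintro x ⟨t, ht, rfl⟩; exact hmap t ht)) hinj
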